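/- Let p : ℝⁿ → (0,∞) be a variable exponent that is globally log-Hölder continuous, and let δ ∈ (0,1). Then there exists a constant C > 0, independent of Q and E, such that for every cube Q ⊂ ℝⁿ with 0 < |Q| ≤ 1 and every measurable set E ⊂ Q with |E| ≥ δ|Q|, one has ‖1_Q‖_{L^{p(·)}} ≤ C ‖1_E‖_{L^{p(·)}}. -/

import Mathlib

open MeasureTheory
open scoped ENNReal NNReal ComplexOrder

noncomputable section

namespace VarBesov

/-- `ℝⁿ` with the Euclidean norm. -/
abbrev Rn (n : ℕ) := EuclideanSpace ℝ (Fin n)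

/-- Local log-Hölder condition with constant `c`. -/
def LocLH {n : ℕ} (c : ℝ) (r : Rn n → ℝ) : Prop :=
  ∀ x y : Rn n, x ≠ y → |r x - r y| ≤ c / Real.log (Real.exp 1 + 1 / dist x y)

/-- Global log-Hölder continuity. -/
def GlobLH {n : ℕ} (r : Rn n → ℝ) : Prop :=
  (∃ c > 0, LocLH c r) ∧
    ∃ rinf : ℝ, ∃ cinf > 0, ∀ x : Rn n, |r x - rinf| ≤ cinf / Real.log (Real.exp 1 + ‖x‖)

/-- A variable exponent: measurable, pointwise positive, with positive essential
infimum and finite essential supremum. -/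
def IsVarExp {n : ℕ} (p : Rn n → ℝ) : Prop :=
  Measurable p ∧ (∀ x, 0 < p x) ∧ 0 < essInf p volume ∧
    Filter.IsBoundedUnder (· ≤ ·) (ae volume) p

/-- The Luxemburg (quasi-)norm of `f` in the variable Lebesgue space `L^{p(·)}`,
valued in `ℝ≥0∞` (it is `∞` iff no admissible `λ` exists). -/
def luxNorm {n : ℕ} (p : Rn n → ℝ) (f : Rn n → ℝ) : ℝ≥0∞ :=
  sInf {lam : ℝ≥0∞ | ∫⁻ x, (ENNReal.ofReal |f x| / lam) ^ p x ≤ 1}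

/-- The mixed Lebesgue-sequence norm `‖{f_j}‖_{ℓ^{q(·)}(L^{p(·)})}`. -/
def mixedNorm {n : ℕ} (p q : Rn n → ℝ) (f : ℕ → Rn n → ℝ) : ℝ≥0∞ :=
  sInf {mu : ℝ≥0∞ |
    ∑' j : ℕ, luxNorm (fun x => p x / q x)
      (fun x => ((ENNReal.ofReal |f j x| / mu) ^ q x).toReal) ≤ 1}

/-- The axis-parallel (half-open) cube with lower corner `a` and side length `h`. -/
def cube {n : ℕ} (a : Rn n) (h : ℝ) : Set (Rn n) := {x | ∀ i, a i ≤ x i ∧ x i < a i + h}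

/-- The dilate `λQ` of the cube with corner `a` and side `h`, concentric with it. -/
def cubeDil {n : ℕ} (a : Rn n) (h lam : ℝ) : Set (Rn n) :=
  cube ((EuclideanSpace.equiv (Fin n) ℝ).symm fun i => a i - (lam - 1) * h / 2) (lam * h)

/-- Index of a dyadic cube `Q_{j,k} = 2^{-j}([0,1)ⁿ + k)` in `𝒬_+`. -/
abbrev DIdx (n : ℕ) := ℕ × (Fin n → ℤ)

/-- Side length of the dyadic cube. -/
def dSide {n : ℕ} (J : DIdx n) : ℝ := (2 : ℝ) ^ (-(J.1 : ℤ))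

/-- Lower corner of the dyadic cube. -/
def dCorner {n : ℕ} (J : DIdx n) : Rn n :=
  (EuclideanSpace.equiv (Fin n) ℝ).symm fun i => dSide J * (J.2 i : ℝ)

/-- The dyadic cube as a set. -/
def dCube {n : ℕ} (J : DIdx n) : Set (Rn n) := cube (dCorner J) (dSide J)

/-- Center of the dyadic cube. -/
def dCenter {n : ℕ} (J : DIdx n) : Rn n :=
  (EuclideanSpace.equiv (Fin n) ℝ).symm fun i => dSide J * ((J.2 i : ℝ) + 1 / 2)

/-- The index `k` such that `x ∈ Q_{j,k}`. -/
def cubeOf {n : ℕ} (j : ℕ) (x : Rn n) : Fin n → ℤ := fun i => ⌊(2 : ℝ) ^ (j : ℕ) * x i⌋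

/-- Euclidean norm of a vector in `ℂ^m`. -/
def evnorm {m : ℕ} (v : Fin m → ℂ) : ℝ := Real.sqrt (∑ i, ‖v i‖ ^ 2)

/-- Operator norm of an `m × m` complex matrix with respect to the Euclidean norm. -/
def opNorm {m : ℕ} (A : Matrix (Fin m) (Fin m) ℂ) : ℝ :=
  ⨆ z : {z : Fin m → ℂ // evnorm z ≤ 1}, evnorm (A.mulVec z.1)

/-- A matrix weight: measurable entries, a.e. positive definite (hence Hermitian)
values, locally integrable entries. -/
def IsMatrixWeight {n m : ℕ} (W : Rn n → Matrix (Fin m) (Fin m) ℂ) : Prop :=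
  (∀ i j, Measurable fun x => W x i j) ∧
  (∀ᵐ x ∂(volume : Measure (Rn n)), (W x).PosDef) ∧
  (∀ i j, LocallyIntegrable (fun x => W x i j) volume)

/-- The quantity `(1/|S|) ∫_S log( ‖ ‖W(·)W⁻¹(y)‖ 1_T ‖_{L^{p(·)}} / ‖1_T‖_{L^{p(·)}} ) dy`. -/
def apIntegrand {n m : ℕ} (p : Rn n → ℝ) (W : Rn n → Matrix (Fin m) (Fin m) ℂ)
    (S T : Set (Rn n)) : ℝ :=
  (volume S).toReal⁻¹ *
    ∫ y in S, Real.log ((luxNorm p (T.indicator fun x => opNorm (W x * (W y)⁻¹)) /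
      luxNorm p (T.indicator fun _ => 1)).toReal)

/-- Matrix `𝒜_{p(·),∞}` weight. -/
def IsApInfty {n m : ℕ} (p : Rn n → ℝ) (W : Rn n → Matrix (Fin m) (Fin m) ℂ) : Prop :=
  IsMatrixWeight W ∧ ∃ C : ℝ, ∀ (a : Rn n) (h : ℝ), 0 < h →
    Real.exp (apIntegrand p W (cube a h) (cube a h)) ≤ C

/-- `W` has `𝒜_{p(·),∞}`-upper dimension `d`. -/
def HasUpperDim {n m : ℕ} (p : Rn n → ℝ) (W : Rn n → Matrix (Fin m) (Fin m) ℂ)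
    (d : ℝ) : Prop :=
  0 ≤ d ∧ ∃ C : ℝ, ∀ (a : Rn n) (h lam : ℝ), 0 < h → 1 ≤ lam →
    Real.exp (apIntegrand p W (cube a h) (cubeDil a h lam)) ≤ C * lam ^ d

/-- `W` has `𝒜_{p(·),∞}`-lower dimension `d`. -/
def HasLowerDim {n m : ℕ} (p : Rn n → ℝ) (W : Rn n → Matrix (Fin m) (Fin m) ℂ)
    (d : ℝ) : Prop :=
  0 ≤ d ∧ ∃ C : ℝ, ∀ (a : Rn n) (h lam : ℝ), 0 < h → 1 ≤ lam →
    Real.exp (apIntegrand p W (cubeDil a h lam) (cube a h)) ≤ C * lam ^ d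

/-- `d^{upper}_{p(·),∞}(W)`: the infimum of all upper dimensions of `W`. -/
def dUpper {n m : ℕ} (p : Rn n → ℝ) (W : Rn n → Matrix (Fin m) (Fin m) ℂ) : ℝ :=
  sInf {d : ℝ | HasUpperDim p W d}

/-- `J(W) = n / min(1, p_−) + d^{upper}_{p(·),∞}(W)`. -/
def JW {n m : ℕ} (p : Rn n → ℝ) (W : Rn n → Matrix (Fin m) (Fin m) ℂ) : ℝ :=
  (n : ℝ) / min 1 (essInf p volume) + dUpper p W

/-- `{A_Q}` is a family of reducing operators of order `p(·)` for `W`,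
with comparison constants `c₁ ≤ c₂`. -/
def IsReducing {n m : ℕ} (p : Rn n → ℝ) (W : Rn n → Matrix (Fin m) (Fin m) ℂ)
    (A : DIdx n → Matrix (Fin m) (Fin m) ℂ) (c₁ c₂ : ℝ) : Prop :=
  0 < c₁ ∧ c₁ ≤ c₂ ∧ (∀ J, (A J).PosDef) ∧
    ∀ (J : DIdx n) (z : Fin m → ℂ),
      ENNReal.ofReal (c₁ * evnorm ((A J).mulVec z)) ≤
          luxNorm p ((dCube J).indicator fun x => evnorm ((W x).mulVec z)) /
            luxNorm p ((dCube J).indicator fun _ => 1) ∧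
      luxNorm p ((dCube J).indicator fun x => evnorm ((W x).mulVec z)) /
          luxNorm p ((dCube J).indicator fun _ => 1) ≤
        ENNReal.ofReal (c₂ * evnorm ((A J).mulVec z))

/-- `t_j(x) = Σ_{Q ∈ 𝒬_j} |Q|^{-1/2} 1_Q(x) t_Q` (only one term is nonzero). -/
def seqFun {n m : ℕ} (t : DIdx n → (Fin m → ℂ)) (j : ℕ) (x : Rn n) : Fin m → ℂ :=
  ((2 : ℝ) ^ (((j : ℝ) * n) / 2)) • t (j, cubeOf j x)

/-- Matrix-weighted variable Besov sequence norm `‖t‖_{b^{s(·)}_{p(·),q(·)}(W)}`. -/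
def besovNormW {n m : ℕ} (p q s : Rn n → ℝ) (W : Rn n → Matrix (Fin m) (Fin m) ℂ)
    (t : DIdx n → (Fin m → ℂ)) : ℝ≥0∞ :=
  mixedNorm p q fun j x => (2 : ℝ) ^ ((j : ℝ) * s x) * evnorm ((W x).mulVec (seqFun t j x))

/-- Averaging matrix-weighted variable Besov sequence norm `‖t‖_{b^{s(·)}_{p(·),q(·)}(𝔸)}`. -/
def besovNormA {n m : ℕ} (p q s : Rn n → ℝ) (A : DIdx n → Matrix (Fin m) (Fin m) ℂ)
    (t : DIdx n → (Fin m → ℂ)) : ℝ≥0∞ :=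
  mixedNorm p q fun j x => (2 : ℝ) ^ ((j : ℝ) * s x) *
    evnorm ((A (j, cubeOf j x)).mulVec (seqFun t j x))

/-- The standard almost-diagonal majorant `b^{DEF}_{Q,R}`. -/
def bDEF {n : ℕ} (D Eexp F : ℝ) (J K : DIdx n) : ℝ :=
  (1 + dist (dCenter J) (dCenter K) / max (dSide J) (dSide K)) ^ (-D) *
    (if dSide J ≤ dSide K then (dSide J / dSide K) ^ Eexp else (dSide K / dSide J) ^ F)

/-- `(D,E,F)`-almost diagonal infinite matrix. -/
def IsAlmostDiagonal {n : ℕ} (D Eexp F : ℝ) (b : DIdx n → DIdx n → ℂ) : Prop :=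
  ∃ C : ℝ, ∀ J K : DIdx n, ‖b J K‖ ≤ C * bDEF D Eexp F J K

/-- Partial derivative in the `i`-th coordinate direction. -/
def pderiv' {n : ℕ} (i : Fin n) (f : Rn n → ℝ) : Rn n → ℝ :=
  fun x => fderiv ℝ f x (EuclideanSpace.single i 1)

/-- Multi-index partial derivative `∂^γ f`. -/
def mderiv {n : ℕ} (γ : Fin n → ℕ) (f : Rn n → ℝ) : Rn n → ℝ :=
  ((List.ofFn fun i : Fin n => (pderiv' i)^[γ i]).foldr (· ∘ ·) id) f

/-- `⌊⌊N⌋⌋ = max {k ∈ ℤ : k < N}`. -/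
def lfloor (N : ℝ) : ℤ := ⌈N⌉ - 1

/-- `(u_K)_Q(x) = |Q|^{-1/2} (1 + |x − x_Q|/l(Q))^{-K}`. -/
def uKQ {n : ℕ} (K : ℝ) (J : DIdx n) (x : Rn n) : ℝ :=
  dSide J ^ (-(n : ℝ) / 2) * (1 + dist x (dCenter J) / dSide J) ^ (-K)

/-- A smooth `(K,L,M,N)`-molecule on the dyadic cube `J`. -/
structure IsMolecule {n : ℕ} (K L M N : ℝ) (J : DIdx n) (f : Rn n → ℝ) : Prop where
  smooth : ContDiff ℝ ((max (lfloor N) 0).toNat : ℕ) f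
  decay : ∀ x, |f x| ≤ uKQ K J x
  vanish : dSide J < 1 → ∀ γ : Fin n → ℕ, ((∑ i, γ i : ℕ) : ℝ) ≤ L →
    (∫ x, (∏ i, x i ^ γ i) * f x) = 0
  derivBound : ∀ γ : Fin n → ℕ, ((∑ i, γ i : ℕ) : ℝ) < N → ∀ x,
    |mderiv γ f x| ≤ dSide J ^ (-((∑ i, γ i : ℕ) : ℝ)) * uKQ M J x
  holder : ∀ γ : Fin n → ℕ, ((∑ i, γ i : ℕ) : ℤ) = lfloor N → ∀ x y,
    |mderiv γ f x - mderiv γ f y| ≤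
      dSide J ^ (-((∑ i, γ i : ℕ) : ℝ)) * (dist x y / dSide J) ^ (N - (lfloor N : ℝ)) *
        ⨆ z : {z : Rn n // ‖z‖ ≤ dist x y}, uKQ M J (x + z.1)

/-- Projection `ℝ^{n+1} → ℝⁿ` forgetting the last coordinate. -/
def projLast {n : ℕ} (x : Rn (n + 1)) : Rn n :=
  (EuclideanSpace.equiv (Fin n) ℝ).symm fun i => x i.castSucc

/-- An exponent on `ℝⁿ` lifted to `ℝ^{n+1}`, independent of the last coordinate. -/
def liftExp {n : ℕ} (p : Rn n → ℝ) : Rn (n + 1) → ℝ := fun x => p (projLast x)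

/-- The dyadic cube `Q(I,k) = I × [l(I)k, l(I)(k+1))` in `ℝ^{n+1}`. -/
def QIk {n : ℕ} (I : DIdx n) (k : ℤ) : DIdx (n + 1) := (I.1, Fin.snoc I.2 k)



/-- The cube is a measurable set. -/
lemma measurableSet_cube {n : ℕ} (a : Rn n) (h : ℝ) : MeasurableSet (cube a h) := by
  have : cube a h = ⋂ i, ({x : Rn n | a i ≤ x i} ∩ {x | x i < a i + h}) := by
    ext x; simp [cube, Set.mem_iInter]
  rw [this]
  refine MeasurableSet.iInter fun i => ?_
  have hm : Measurable fun x : Rn n => x i :=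
    (continuous_apply i).measurable.comp (PiLp.continuous_ofLp 2 _).measurable
  exact (measurableSet_le measurable_const hm).inter (measurableSet_lt hm measurable_const)

/-- The volume of a cube of side `h ≥ 0` is `h ^ n`. -/
lemma volume_cube {n : ℕ} (a : Rn n) (h : ℝ) (hh : 0 ≤ h) :
    volume (cube a h) = ENNReal.ofReal (h ^ n) := by
  have e := EuclideanSpace.volume_preserving_symm_measurableEquiv_toLp (Fin n)
  have : cube a h = (MeasurableEquiv.toLp 2 (Fin n → ℝ)).symm ⁻¹'
      (Set.univ.pi fun i => Set.Ico (a i) (a i + h)) := by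
    ext x; simp [cube, Set.mem_pi]
  rw [this, e.measure_preimage (MeasurableSet.univ_pi fun i => measurableSet_Ico).nullMeasurableSet,
    volume_pi_pi]
  simp [Real.volume_Ico, ENNReal.ofReal_pow hh]

/-- Upper bound for the Luxemburg norm of an indicator. -/
lemma luxNorm_indicator_le {n : ℕ} (p : Rn n → ℝ) (hpos : ∀ x, 0 < p x)
    (S : Set (Rn n)) (hS : MeasurableSet S) (A q' : ℝ) (hA0 : 0 < A) (hA1 : A ≤ 1)
    (hvol : volume S = ENNReal.ofReal A) (hq' : 0 < q') (hpq : ∀ x ∈ S, p x ≤ q') :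
    luxNorm p (S.indicator fun _ => 1) ≤ ENNReal.ofReal (A ^ (1 / q')) := by
  set lam : ℝ≥0∞ := ENNReal.ofReal (A ^ (1 / q')) with hlam
  have hApow : 0 < A ^ (1 / q') := Real.rpow_pos_of_pos hA0 _
  have hlam0 : lam ≠ 0 := by rw [hlam]; exact (ENNReal.ofReal_pos.2 hApow).ne'
  have hlam1 : lam ≤ 1 := by
    rw [hlam]
    refine ENNReal.ofReal_le_one.2 (Real.rpow_le_one (le_of_lt hA0) hA1 (by positivity))
  have hinv1 : (1:ℝ≥0∞) ≤ lam⁻¹ := ENNReal.one_le_inv.2 hlam1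
  refine sInf_le ?_
  show ∫⁻ x, (ENNReal.ofReal |(S.indicator fun _ => (1:ℝ)) x| / lam) ^ p x ≤ 1
  have hbound : ∀ x, (ENNReal.ofReal |(S.indicator fun _ => (1:ℝ)) x| / lam) ^ p x ≤
      S.indicator (fun _ => lam⁻¹ ^ q') x := by
    intro x
    by_cases hx : x ∈ S
    · rw [Set.indicator_of_mem hx, Set.indicator_of_mem hx]
      simp only [abs_one, ENNReal.ofReal_one, one_div]
      exact ENNReal.rpow_le_rpow_of_exponent_le hinv1 (hpq x hx)
    · rw [Set.indicator_of_notMem hx, Set.indicator_of_notMem hx]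
      simp only [abs_zero, ENNReal.ofReal_zero, ENNReal.zero_div]
      rw [ENNReal.zero_rpow_of_pos (hpos x)]
  calc ∫⁻ x, (ENNReal.ofReal |(S.indicator fun _ => (1:ℝ)) x| / lam) ^ p x
      ≤ ∫⁻ x, S.indicator (fun _ => lam⁻¹ ^ q') x := lintegral_mono hbound
    _ = lam⁻¹ ^ q' * volume S := lintegral_indicator_const hS _
    _ = 1 := by
        rw [hvol, hlam, ENNReal.inv_rpow, ENNReal.ofReal_rpow_of_pos hApow,
          ← Real.rpow_mul (le_of_lt hA0), one_div, inv_mul_cancel₀ (ne_of_gt hq'),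
          Real.rpow_one]
        exact ENNReal.inv_mul_cancel (ENNReal.ofReal_pos.2 hA0).ne' ENNReal.ofReal_ne_top
    _ ≤ 1 := le_refl _

/-- Lower bound for the Luxemburg norm of an indicator. -/
lemma le_luxNorm_indicator {n : ℕ} (p : Rn n → ℝ)
    (E : Set (Rn n)) (hE : MeasurableSet E) (B q : ℝ) (hB0 : 0 < B) (hB1 : B ≤ 1)
    (hvol : volume E = ENNReal.ofReal B) (hq : 0 < q) (hpq : ∀ᵐ x ∂volume, x ∈ E → q ≤ p x) :
    ENNReal.ofReal (B ^ (1 / q)) ≤ luxNorm p (E.indicator fun _ => 1) := by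
  refine le_sInf fun lam hlam => ?_
  simp only [Set.mem_setOf_eq] at hlam
  by_cases h1 : (1:ℝ≥0∞) ≤ lam
  · exact le_trans (ENNReal.ofReal_le_one.2
      (Real.rpow_le_one hB0.le hB1 (by positivity))) h1
  push_neg at h1
  have hinv1 : (1:ℝ≥0∞) ≤ lam⁻¹ := ENNReal.one_le_inv.2 h1.le
  have hkey : lam⁻¹ ^ q * volume E ≤ 1 := by
    calc lam⁻¹ ^ q * volume E
        = ∫⁻ x, E.indicator (fun _ => lam⁻¹ ^ q) x := (lintegral_indicator_const hE _).symm
      _ ≤ ∫⁻ x, (ENNReal.ofReal |(E.indicator fun _ => (1:ℝ)) x| / lam) ^ p x := by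
          refine lintegral_mono_ae (hpq.mono fun x hx => ?_)
          by_cases hxE : x ∈ E
          · rw [Set.indicator_of_mem hxE, Set.indicator_of_mem hxE]
            simp only [abs_one, ENNReal.ofReal_one, one_div]
            exact ENNReal.rpow_le_rpow_of_exponent_le hinv1 (hx hxE)
          · rw [Set.indicator_of_notMem hxE]; exact zero_le
      _ ≤ 1 := hlam
  have hvolpos : volume E ≠ 0 := by rw [hvol]; exact (ENNReal.ofReal_pos.2 hB0).ne'
  by_cases hlam0 : lam = 0
  · exfalso
    rw [hlam0, ENNReal.inv_zero, ENNReal.top_rpow_of_pos hq, ENNReal.top_mul hvolpos] at hkey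
    exact (by simp : ¬ (⊤:ℝ≥0∞) ≤ 1) hkey
  have hlamtop : lam ≠ ⊤ := h1.ne_top
  have hne0 : lam ^ q ≠ 0 := by
    simp [ENNReal.rpow_eq_zero_iff, hlam0, hlamtop, not_lt.2 hq.le]
  have hnetop : lam ^ q ≠ ⊤ := by
    simp [ENNReal.rpow_eq_top_iff, hlam0, hlamtop, not_lt.2 hq.le]
  have h2 : volume E ≤ lam ^ q := by
    have heq : volume E = lam ^ q * (lam⁻¹ ^ q * volume E) := by
      rw [ENNReal.inv_rpow, ← mul_assoc, ENNReal.mul_inv_cancel hne0 hnetop, one_mul]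
    calc volume E = lam ^ q * (lam⁻¹ ^ q * volume E) := heq
      _ ≤ lam ^ q * 1 := mul_le_mul_right hkey _
      _ = lam ^ q := mul_one _
  calc ENNReal.ofReal (B ^ (1 / q)) = (ENNReal.ofReal B) ^ (1 / q) :=
        (ENNReal.ofReal_rpow_of_pos hB0).symm
    _ ≤ (lam ^ q) ^ (1 / q) := ENNReal.rpow_le_rpow (hvol ▸ h2) (by positivity)
    _ = lam := by
        rw [← ENNReal.rpow_mul, one_div, mul_inv_cancel₀ hq.ne', ENNReal.rpow_one]


set_option maxHeartbeats 1000000 in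
theorem statement2 {n : ℕ} (hn : 1 ≤ n) (p : Rn n → ℝ) (hp : IsVarExp p) (hpLH : GlobLH p)
    (δ : ℝ) (hδ0 : 0 < δ) (hδ1 : δ < 1) :
    ∃ C > 0, ∀ (a : Rn n) (h : ℝ), 0 < h → volume (cube a h) ≤ 1 →
      ∀ E : Set (Rn n), MeasurableSet E → E ⊆ cube a h →
        δ * (volume (cube a h)).toReal ≤ (volume E).toReal →
        luxNorm p ((cube a h).indicator fun _ => 1) ≤
          ENNReal.ofReal C * luxNorm p (E.indicator fun _ => 1) := by
  obtain ⟨hmeas, hpos, hm, hbdd⟩ := hp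
  obtain ⟨⟨c, hc, hLH⟩, -⟩ := hpLH
  set m : ℝ := essInf p volume with hmdef
  have hae_m : ∀ᵐ x ∂(volume : Measure (Rn n)), m ≤ p x := by
    refine ae_essInf_le ?_
    exact Filter.isBoundedUnder_of ⟨0, fun x => (hpos x).le⟩
  have hsn : 1 ≤ Real.sqrt n := by
    rw [show (1:ℝ) = Real.sqrt 1 by simp]
    exact Real.sqrt_le_sqrt (by exact_mod_cast hn)
  have hsn0 : 0 < Real.sqrt n := lt_of_lt_of_le one_pos hsn
  have hlogsn : 0 ≤ Real.log (Real.sqrt n) := Real.log_nonneg hsn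
  set K : ℝ := 2 * n * c * (1 + Real.log (Real.sqrt n)) / m ^ 2 with hKdef
  refine ⟨Real.exp K * δ ^ (-(1 / m)), by positivity, ?_⟩
  intro a h hh hvol E hEm hEQ hδE
  set C : ℝ := Real.exp K * δ ^ (-(1 / m)) with hCdef
  have hC0 : 0 < C := by positivity
  set A : ℝ := h ^ n with hAdef
  have hA0 : 0 < A := pow_pos hh n
  have hvolQ : volume (cube a h) = ENNReal.ofReal A := volume_cube a h hh.le
  have hA1 : A ≤ 1 := by
    rw [hvolQ] at hvol
    exact (ENNReal.ofReal_le_one).1 hvol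
  have hh1 : h ≤ 1 := by
    by_contra hcon
    push_neg at hcon
    have : (1:ℝ) < h ^ n := one_lt_pow₀ hcon (by omega)
    linarith
  have hAtoReal : (volume (cube a h)).toReal = A := by
    rw [hvolQ, ENNReal.toReal_ofReal hA0.le]
  set B : ℝ := (volume E).toReal with hBdef
  have hEle : volume E ≤ volume (cube a h) := measure_mono hEQ
  have hEtop : volume E ≠ ⊤ := by
    refine ne_top_of_le_ne_top ?_ hEle
    rw [hvolQ]; exact ENNReal.ofReal_ne_top
  have hvolE : volume E = ENNReal.ofReal B := (ENNReal.ofReal_toReal hEtop).symm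
  rw [hAtoReal] at hδE
  have hB0 : 0 < B := lt_of_lt_of_le (by positivity) hδE
  have hBA : B ≤ A := by
    rw [← hAtoReal]
    exact ENNReal.toReal_mono (by rw [hvolQ]; exact ENNReal.ofReal_ne_top) hEle
  have hB1 : B ≤ 1 := hBA.trans hA1
  -- the log-Hölder modulus over the cube
  set L : ℝ := Real.log (Real.exp 1 + 1 / (Real.sqrt n * h)) with hLdef
  have hargpos : (0:ℝ) < 1 / (Real.sqrt n * h) := by positivity
  have hL1 : 1 ≤ L := by
    calc (1:ℝ) = Real.log (Real.exp 1) := (Real.log_exp 1).symm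
      _ ≤ L := Real.log_le_log (Real.exp_pos 1) (by rw [hLdef] at *; linarith)
  have hL0 : 0 < L := lt_of_lt_of_le one_pos hL1
  set ω : ℝ := c / L with hωdef
  have hω0 : 0 ≤ ω := div_nonneg hc.le hL0.le
  have hdistle : ∀ x ∈ cube a h, dist x a ≤ Real.sqrt n * h := by
    intro x hx
    have hcoord : ∀ i, dist (x i) (a i) ^ 2 ≤ h ^ 2 := by
      intro i
      obtain ⟨h1, h2⟩ := hx i
      rw [Real.dist_eq, abs_of_nonneg (by linarith)]
      nlinarith
    calc dist x a = Real.sqrt (∑ i, dist (x i) (a i) ^ 2) := EuclideanSpace.dist_eq x a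
      _ ≤ Real.sqrt (∑ _i : Fin n, h ^ 2) :=
          Real.sqrt_le_sqrt (Finset.sum_le_sum fun i _ => hcoord i)
      _ = Real.sqrt ((n : ℝ) * h ^ 2) := by rw [Finset.sum_const]; simp [mul_comm]
      _ = Real.sqrt n * h := by
          rw [Real.sqrt_mul (Nat.cast_nonneg n), Real.sqrt_sq hh.le]
  have hosc : ∀ x ∈ cube a h, |p x - p a| ≤ ω := by
    intro x hx
    rcases eq_or_ne x a with rfl | hne
    · simpa using hω0
    · have hd0 : 0 < dist x a := dist_pos.2 hne
      refine (hLH x a hne).trans ?_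
      rw [hωdef]
      have harg : Real.exp 1 + 1 / (Real.sqrt n * h) ≤ Real.exp 1 + 1 / dist x a := by
        have := one_div_le_one_div_of_le hd0 (hdistle x hx)
        linarith
      have hlogle : L ≤ Real.log (Real.exp 1 + 1 / dist x a) := by
        rw [hLdef]
        exact Real.log_le_log (by positivity) harg
      exact div_le_div_of_nonneg_left hc.le hL0 hlogle
  set q' : ℝ := max m (p a + ω) with hq'def
  set qh : ℝ := max m (p a - ω) with hqhdef
  have hq'm : m ≤ q' := le_max_left _ _
  have hqhm : m ≤ qh := le_max_left _ _
  have hq'0 : 0 < q' := lt_of_lt_of_le hm hq'm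
  have hqh0 : 0 < qh := lt_of_lt_of_le hm hqhm
  have hpup : ∀ x ∈ cube a h, p x ≤ q' := by
    intro x hx
    have := hosc x hx
    have : p x ≤ p a + ω := by cases abs_le.1 this; linarith
    exact this.trans (le_max_right _ _)
  have hplow : ∀ᵐ x ∂(volume : Measure (Rn n)), x ∈ E → qh ≤ p x := by
    refine hae_m.mono fun x hx hxE => ?_
    refine max_le hx ?_
    have := hosc x (hEQ hxE)
    cases abs_le.1 this; linarith
  have hdiff : q' - qh ≤ 2 * ω := by
    have : q' ≤ qh + 2 * ω := by
      refine max_le ?_ ?_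
      · linarith
      · have : p a - ω ≤ qh := le_max_right _ _
        linarith
    linarith
  -- the key real inequality
  have hlogh : -Real.log h ≤ (1 + Real.log (Real.sqrt n)) * L := by
    have h1h : (1:ℝ) / h = Real.sqrt n * (1 / (Real.sqrt n * h)) := by
      field_simp
    have hle : (1:ℝ) / h ≤ Real.sqrt n * (Real.exp 1 + 1 / (Real.sqrt n * h)) := by
      rw [h1h]
      have := Real.exp_pos 1
      nlinarith
    have hlog1 : Real.log (1 / h) ≤ Real.log (Real.sqrt n) + L := by
      calc Real.log (1 / h) ≤ Real.log (Real.sqrt n * (Real.exp 1 + 1 / (Real.sqrt n * h))) :=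
            Real.log_le_log (by positivity) hle
        _ = Real.log (Real.sqrt n) + L := by
            rw [Real.log_mul (ne_of_gt hsn0) (by positivity), hLdef]
    rw [one_div, Real.log_inv] at hlog1
    have haux : Real.log (Real.sqrt n) ≤ Real.log (Real.sqrt n) * L :=
      le_mul_of_one_le_right hlogsn hL1
    have hexpand : (1 + Real.log (Real.sqrt n)) * L = L + Real.log (Real.sqrt n) * L := by ring
    linarith
  have hlogA : -Real.log A ≤ (n : ℝ) * ((1 + Real.log (Real.sqrt n)) * L) := by
    rw [hAdef, Real.log_pow]
    have hn0 : (0:ℝ) ≤ (n:ℝ) := Nat.cast_nonneg n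
    calc -((n:ℝ) * Real.log h) = (n:ℝ) * (-Real.log h) := by ring
      _ ≤ (n : ℝ) * ((1 + Real.log (Real.sqrt n)) * L) := by
          exact mul_le_mul_of_nonneg_left hlogh hn0
  have hlogA0 : 0 ≤ -Real.log A := by
    have := Real.log_nonpos hA0.le hA1
    linarith
  have hdinv : 1 / qh - 1 / q' ≤ 2 * ω / m ^ 2 := by
    have e1 : 1 / qh - 1 / q' = (q' - qh) / (qh * q') := by
      rw [one_div, one_div, inv_sub_inv (ne_of_gt hqh0) (ne_of_gt hq'0)]
    rw [e1]
    refine div_le_div₀ (by positivity) hdiff (by positivity) ?_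
    nlinarith
  have hexpbound : (1 / qh - 1 / q') * (-Real.log A) ≤ K := by
    have hstep1 : (1 / qh - 1 / q') * (-Real.log A) ≤ (2 * ω / m ^ 2) * (-Real.log A) :=
      mul_le_mul_of_nonneg_right hdinv hlogA0
    have hstep2 : (2 * ω / m ^ 2) * (-Real.log A) ≤
        (2 * ω / m ^ 2) * ((n : ℝ) * ((1 + Real.log (Real.sqrt n)) * L)) :=
      mul_le_mul_of_nonneg_left hlogA (by positivity)
    have hstep3 : (2 * ω / m ^ 2) * ((n : ℝ) * ((1 + Real.log (Real.sqrt n)) * L)) = K := by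
      rw [hωdef, hKdef]
      field_simp
    linarith
  have hAq' : A ^ (1 / q') ≤ Real.exp K * A ^ (1 / qh) := by
    have hsplit : A ^ (1 / q') = A ^ (1 / q' - 1 / qh) * A ^ (1 / qh) := by
      rw [← Real.rpow_add hA0]
      ring_nf
    rw [hsplit]
    refine mul_le_mul_of_nonneg_right ?_ (Real.rpow_nonneg hA0.le _)
    rw [Real.rpow_def_of_pos hA0]
    refine Real.exp_le_exp.2 ?_
    calc Real.log A * (1 / q' - 1 / qh) = (1 / qh - 1 / q') * (-Real.log A) := by ring
      _ ≤ K := hexpbound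
  have hBlow : δ ^ (1 / m) * A ^ (1 / qh) ≤ B ^ (1 / qh) := by
    have h1 : (δ * A) ^ (1 / qh) ≤ B ^ (1 / qh) :=
      Real.rpow_le_rpow (by positivity) hδE (by positivity)
    have h2 : (δ * A) ^ (1 / qh) = δ ^ (1 / qh) * A ^ (1 / qh) :=
      Real.mul_rpow hδ0.le hA0.le
    have h3 : δ ^ (1 / m) ≤ δ ^ (1 / qh) := by
      refine Real.rpow_le_rpow_of_exponent_ge hδ0 hδ1.le ?_
      exact one_div_le_one_div_of_le hm hqhm
    have h4 : δ ^ (1 / m) * A ^ (1 / qh) ≤ δ ^ (1 / qh) * A ^ (1 / qh) :=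
      mul_le_mul_of_nonneg_right h3 (Real.rpow_nonneg hA0.le _)
    linarith
  have hfinal : A ^ (1 / q') ≤ C * B ^ (1 / qh) := by
    have hδm0 : (0:ℝ) < δ ^ (1 / m) := Real.rpow_pos_of_pos hδ0 _
    have hCδ : C * δ ^ (1 / m) = Real.exp K := by
      rw [hCdef, Real.rpow_neg hδ0.le, mul_assoc, inv_mul_cancel₀ (ne_of_gt hδm0), mul_one]
    calc A ^ (1 / q') ≤ Real.exp K * A ^ (1 / qh) := hAq'
      _ = C * (δ ^ (1 / m) * A ^ (1 / qh)) := by rw [← hCδ]; ring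
      _ ≤ C * B ^ (1 / qh) := mul_le_mul_of_nonneg_left hBlow hC0.le
  calc luxNorm p ((cube a h).indicator fun _ => 1)
      ≤ ENNReal.ofReal (A ^ (1 / q')) :=
        luxNorm_indicator_le p hpos _ (measurableSet_cube a h) A q' hA0 hA1 hvolQ hq'0 hpup
    _ ≤ ENNReal.ofReal (C * B ^ (1 / qh)) := ENNReal.ofReal_le_ofReal hfinal
    _ = ENNReal.ofReal C * ENNReal.ofReal (B ^ (1 / qh)) := ENNReal.ofReal_mul hC0.le
    _ ≤ ENNReal.ofReal C * luxNorm p (E.indicator fun _ => 1) :=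
        mul_le_mul_right (le_luxNorm_indicator p E hEm B qh hB0 hB1 hvolE hqh0 hplow) _


end VarBesov
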